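/- Let c > 0 be a real number. For every real x with |x| < c, the series Σ_{n=1}^{∞} (−1)^{n+1} · cos(n π x / c) / n converges and its sum equals ln( 2 · cos(π x / (2c)) ). -/

import Mathlib

open Real Filter in
theorem statement_15 (c : ℝ) (hc : 0 < c) (x : ℝ) (hx : |x| < c) :
    Tendsto (fun N : ℕ => ∑ n ∈ Finset.Icc 1 N,
        (-1 : ℝ) ^ (n + 1) * Real.cos (n * π * x / c) / n)
      atTop (nhds (Real.log (2 * Real.cos (π * x / (2 * c))))) := by
  classical
  set θ : ℝ := π * x / c with hθdef
  have hθ : |θ| < π := by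
    have h1 : |θ| = π * |x| / c := by
      rw [hθdef, abs_div, abs_mul, abs_of_pos pi_pos, abs_of_pos hc]
    rw [h1, div_lt_iff₀ hc]
    nlinarith [pi_pos, abs_nonneg x]
  have hθ2 : |θ / 2| < π / 2 := by rw [abs_div]; simp; linarith
  have hθlt := abs_lt.mp hθ2
  have hcos2 : 0 < Real.cos (θ / 2) :=
    Real.cos_pos_of_mem_Ioo ⟨by linarith [hθlt.1], hθlt.2⟩
  set w : ℂ := Complex.exp (θ * Complex.I) with hwdef
  have hwabs : ‖w‖ = 1 := Complex.norm_exp_ofReal_mul_I θ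
  have hwre : w.re = Real.cos θ := Complex.exp_ofReal_mul_I_re θ
  have hcosθ : Real.cos θ = 2 * Real.cos (θ / 2) ^ 2 - 1 := by
    have h := Real.cos_sq (θ / 2)
    rw [show 2 * (θ / 2) = θ by ring] at h
    linarith
  have h1wre : (0:ℝ) < (1 + w).re := by
    rw [Complex.add_re, Complex.one_re, hwre, hcosθ]; nlinarith
  have h1wne : (1:ℂ) + w ≠ 0 := fun h => by simp [h] at h1wre
  -- the sequence of coefficients
  set f : ℕ → ℂ := fun n => (-1 : ℂ) ^ (n + 1) * w ^ n / n with hfdef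
  -- convergence of ∑ f n via Dirichlet's test
  have hZ : ∀ n : ℕ, ‖∑ i ∈ Finset.range n, w * (-w) ^ i‖ ≤ 2 / ‖(1:ℂ) + w‖ := by
    intro n
    have hne : -w ≠ 1 := by
      intro h
      apply h1wne
      rw [show w = -1 by linear_combination -h]; ring
    rw [← Finset.mul_sum, geom_sum_eq hne]
    rw [norm_mul, norm_div]
    have hw1 : ‖w‖ = 1 := by rw [hwabs]
    have h1 : ‖-w - 1‖ = ‖(1:ℂ) + w‖ := by
      rw [show -w - 1 = -(1 + w) by ring, norm_neg]
    have h2 : ‖(-w) ^ n - 1‖ ≤ 2 := by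
      calc ‖(-w) ^ n - 1‖ ≤ ‖(-w) ^ n‖ + ‖(1:ℂ)‖ := norm_sub_le _ _
        _ = 2 := by rw [norm_pow, norm_neg, hw1]; norm_num
    rw [hw1, one_mul, h1]
    gcongr
  have hF : Antitone (fun n : ℕ => ((n : ℝ) + 1)⁻¹) := by
    intro a b hab
    have : (a : ℝ) + 1 ≤ (b : ℝ) + 1 := by exact_mod_cast by omega
    exact inv_anti₀ (by positivity) this
  have hF0 : Tendsto (fun n : ℕ => ((n : ℝ) + 1)⁻¹) atTop (nhds 0) := by
    simpa only [one_div] using tendsto_one_div_add_atTop_nhds_zero_nat (𝕜 := ℝ)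
  have hcauchy := hF.cauchySeq_series_mul_of_tendsto_zero_of_bounded hF0 hZ
  obtain ⟨L, hL⟩ := cauchySeq_tendsto_of_complete hcauchy
  have hfs : ∀ n : ℕ, ∑ i ∈ Finset.range (n + 1), f i
      = ∑ i ∈ Finset.range n, ((i : ℝ) + 1)⁻¹ • (w * (-w) ^ i) := by
    intro n
    rw [Finset.sum_range_succ']
    have hf0 : f 0 = 0 := by simp [hfdef]
    rw [hf0, add_zero]
    refine Finset.sum_congr rfl fun i _ => ?_
    rw [hfdef]
    simp only
    rw [Complex.real_smul]
    push_cast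
    rw [neg_pow, div_eq_mul_inv]
    ring
  have hLf : Tendsto (fun n => ∑ i ∈ Finset.range n, f i) atTop (nhds L) := by
    rw [← Filter.tendsto_add_atTop_iff_nat 1]
    exact hL.congr fun n => (hfs n).symm
  -- Abel's limit theorem
  have habel := Complex.tendsto_tsum_powerSeries_nhdsWithin_lt hLf
  rw [Filter.tendsto_map'_iff] at habel
  have hIoo : Set.Ioo (-1 : ℝ) 1 ∈ nhdsWithin (1:ℝ) (Set.Iio 1) :=
    Ioo_mem_nhdsLT_of_mem ⟨by norm_num, le_refl _⟩
  have heq : ∀ r ∈ Set.Ioo (-1 : ℝ) 1,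
      ((fun z : ℂ => ∑' n, f n * z ^ n) ∘ Complex.ofReal) r
        = Complex.log (1 + r * w) := by
    intro r hr
    have hrw : ‖(r : ℂ) * w‖ < 1 := by
      rw [norm_mul, hwabs, mul_one, Complex.norm_real,
        Real.norm_eq_abs]
      exact abs_lt.mpr ⟨hr.1, hr.2⟩
    have hs := Complex.hasSum_taylorSeries_log hrw
    have hfun : (fun n : ℕ => f n * (r : ℂ) ^ n)
        = fun n : ℕ => (-1) ^ (n + 1) * ((r : ℂ) * w) ^ n / n := by
      funext n; rw [hfdef]; simp only; rw [mul_pow]; ring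
    simp only [Function.comp_apply]
    rw [hfun, hs.tsum_eq]
  have hslit : (1 : ℂ) + w ∈ Complex.slitPlane := Or.inl h1wre
  have hlog : Tendsto (fun r : ℝ => Complex.log (1 + r * w))
      (nhdsWithin (1:ℝ) (Set.Iio 1)) (nhds (Complex.log (1 + w))) := by
    have hc1 : Tendsto (fun r : ℝ => 1 + (r : ℂ) * w) (nhds 1) (nhds (1 + w)) := by
      have h5 : Tendsto (fun r : ℝ => 1 + (r : ℂ) * w) (nhds 1)
          (nhds (1 + ((1:ℝ) : ℂ) * w)) :=
        (continuous_const.add (Complex.continuous_ofReal.mul continuous_const)).continuousAt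
      simpa using h5
    have h6 := (continuousAt_clog hslit).tendsto.comp hc1
    exact h6.mono_left nhdsWithin_le_nhds
  have habel' : Tendsto (fun r : ℝ => Complex.log (1 + r * w))
      (nhdsWithin (1:ℝ) (Set.Iio 1)) (nhds L) :=
    habel.congr' (eventually_of_mem hIoo heq)
  have hLeq : L = Complex.log (1 + w) := tendsto_nhds_unique habel' hlog
  -- compute the absolute value
  have h1wre' : (1 + w).re = 1 + Real.cos θ := by
    rw [Complex.add_re, Complex.one_re, hwre]
  have h1wim : (1 + w).im = Real.sin θ := by
    rw [Complex.add_im, Complex.one_im, hwdef, Complex.exp_ofReal_mul_I_im, zero_add]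
  have habs : ‖1 + w‖ = 2 * Real.cos (θ / 2) := by
    rw [← sq_eq_sq₀ (norm_nonneg _) (by linarith)]
    rw [Complex.sq_norm, Complex.normSq_apply, h1wre', h1wim]
    nlinarith [Real.sin_sq_add_cos_sq θ, hcosθ]
  -- real parts
  have hre : Tendsto (fun n => (∑ i ∈ Finset.range n, f i).re) atTop
      (nhds (Real.log (2 * Real.cos (θ / 2)))) := by
    have := (Complex.continuous_re.tendsto L).comp hLf
    have hLre : L.re = Real.log (2 * Real.cos (θ / 2)) := by
      rw [hLeq, Complex.log_re, habs]
    rw [← hLre]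
    exact this
  have hterm : ∀ n : ℕ, (f n).re = (-1 : ℝ) ^ (n + 1) * Real.cos (n * π * x / c) / n := by
    intro n
    have hnθ : (n : ℝ) * π * x / c = n * θ := by rw [hθdef]; ring
    have hfn : f n = (((-1 : ℝ) ^ (n + 1) / n : ℝ) : ℂ)
        * Complex.exp (((n : ℝ) * θ : ℝ) * Complex.I) := by
      rw [hfdef]
      simp only
      rw [hwdef, ← Complex.exp_nat_mul]
      push_cast
      rw [div_eq_mul_inv, div_eq_mul_inv]
      ring_nf
    rw [hfn, Complex.re_ofReal_mul, Complex.exp_ofReal_mul_I_re, hnθ]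
    ring
  have hkey : ∀ N : ℕ, ∑ n ∈ Finset.Icc 1 N,
      (-1 : ℝ) ^ (n + 1) * Real.cos (n * π * x / c) / n
      = (∑ i ∈ Finset.range (N + 1), f i).re := by
    intro N
    induction N with
    | zero =>
      simp [hfdef]
    | succ n ih =>
      rw [Finset.sum_Icc_succ_top (by omega : 1 ≤ n + 1), Finset.sum_range_succ,
        Complex.add_re, ih, hterm (n + 1)]
  have harg : π * x / (2 * c) = θ / 2 := by rw [hθdef]; ring
  rw [harg]
  have := hre.comp (tendsto_add_atTop_nat 1)
  refine this.congr fun N => ?_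
  simp only [Function.comp_apply]
  exact (hkey N).symm
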